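/- Fix n ≥ 2, α ∈ (0,n), and λ ∈ ℝ. Let R : ℝⁿ → ℝⁿ be the reflection across the hyperplane {x : x·e₁ = λ}, i.e. R(x) = x − 2((x·e₁) − λ) e₁. Let E ⊂ ℝⁿ be a bounded Lebesgue measurable set, let Σ = E ∩ {x : x·e₁ < λ}, and suppose the reflected set R(Σ) is contained in E up to a Lebesgue null set. Let G = (E ∩ {x : x·e₁ > λ}) \ R(Σ). If G has positive Lebesgue measure, then for every x ∈ ℝⁿ with x·e₁ < λ one has the strict inequality v_E(R(x)) > v_E(x). -/

import Mathlib

open MeasureTheory Metric Set Bornology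

noncomputable def rieszPotential {n : ℕ} (α : ℝ) (E : Set (EuclideanSpace ℝ (Fin n)))
    (x : EuclideanSpace ℝ (Fin n)) : ℝ :=
  ∫ y in E, ‖x - y‖ ^ (-α)

section Helpers

variable {n : ℕ} {lam α : ℝ} {e : EuclideanSpace ℝ (Fin n)}

/-- The reflection map across the hyperplane `{x : ⟪x,e⟫ = lam}`. -/
noncomputable def reflH (lam : ℝ) (e : EuclideanSpace ℝ (Fin n))
    (x : EuclideanSpace ℝ (Fin n)) : EuclideanSpace ℝ (Fin n) :=
  x - (2 * ((inner ℝ x e : ℝ) - lam)) • e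

lemma inner_self_one (he : ‖e‖ = 1) : (inner ℝ e e : ℝ) = 1 := by
  rw [real_inner_self_eq_norm_sq, he]; norm_num

lemma reflH_inner (he : ‖e‖ = 1) (x : EuclideanSpace ℝ (Fin n)) :
    (inner ℝ (reflH lam e x) e : ℝ) = 2 * lam - (inner ℝ x e : ℝ) := by
  simp only [reflH, inner_sub_left, real_inner_smul_left, inner_self_one he]
  ring

lemma reflH_invol (he : ‖e‖ = 1) : Function.Involutive (reflH lam e) := by
  intro x
  have h := reflH_inner (lam := lam) he x
  simp only [reflH] at h ⊢
  rw [h]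
  module

lemma norm_reflv (he : ‖e‖ = 1) (v : EuclideanSpace ℝ (Fin n)) :
    ‖v - (2 * (inner ℝ v e : ℝ)) • e‖ = ‖v‖ := by
  have h : ‖v - (2 * (inner ℝ v e : ℝ)) • e‖ ^ 2 = ‖v‖ ^ 2 := by
    rw [norm_sub_sq_real, real_inner_smul_right, norm_smul, he, Real.norm_eq_abs, mul_one,
      sq_abs]
    ring
  rw [← Real.sqrt_sq (norm_nonneg (v - _)), h, Real.sqrt_sq (norm_nonneg v)]

lemma reflH_sub (he : ‖e‖ = 1) (x y : EuclideanSpace ℝ (Fin n)) :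
    reflH lam e x - reflH lam e y = (x - y) - (2 * (inner ℝ (x - y) e : ℝ)) • e := by
  simp only [reflH, inner_sub_left]
  module

lemma reflH_isometry (he : ‖e‖ = 1) (x y : EuclideanSpace ℝ (Fin n)) :
    ‖reflH lam e x - reflH lam e y‖ = ‖x - y‖ := by
  rw [reflH_sub he, norm_reflv he]

lemma reflH_fixed {y : EuclideanSpace ℝ (Fin n)} (hy : (inner ℝ y e : ℝ) = lam) :
    reflH lam e y = y := by
  simp [reflH, hy]

lemma reflH_norm_comm (he : ‖e‖ = 1) (x y : EuclideanSpace ℝ (Fin n)) :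
    ‖reflH lam e x - y‖ = ‖x - reflH lam e y‖ := by
  conv_lhs => rw [show y = reflH lam e (reflH lam e y) from (reflH_invol he y).symm]
  rw [reflH_isometry he]

lemma reflH_strict (he : ‖e‖ = 1) {x y : EuclideanSpace ℝ (Fin n)}
    (hx : (inner ℝ x e : ℝ) < lam) (hy : lam < (inner ℝ y e : ℝ)) :
    ‖reflH lam e x - y‖ < ‖x - y‖ := by
  refine lt_of_pow_lt_pow_left₀ 2 (norm_nonneg _) ?_
  have h1 : reflH lam e x - y = (x - y) - (2 * ((inner ℝ x e : ℝ) - lam)) • e := by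
    simp only [reflH]; module
  rw [h1, norm_sub_sq_real, real_inner_smul_right, inner_sub_left, norm_smul, he,
    Real.norm_eq_abs, mul_one, sq_abs]
  nlinarith [mul_pos (sub_pos.mpr hx) (sub_pos.mpr hy)]

/-- Linear part of the reflection. -/
noncomputable def reflL (e : EuclideanSpace ℝ (Fin n)) :
    EuclideanSpace ℝ (Fin n) →ₗ[ℝ] EuclideanSpace ℝ (Fin n) where
  toFun v := v - (2 * (inner ℝ v e : ℝ)) • e
  map_add' u v := by simp only [inner_add_left]; module
  map_smul' c v := by simp only [real_inner_smul_left, RingHom.id_apply]; module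

lemma reflL_invol (he : ‖e‖ = 1) : Function.Involutive (reflL e) := by
  intro x
  simp only [reflL, LinearMap.coe_mk, AddHom.coe_mk, inner_sub_left, real_inner_smul_left,
    inner_self_one he]
  module

/-- The linear part of the reflection as a linear isometry equivalence. -/
noncomputable def reflLI (he : ‖e‖ = 1) :
    EuclideanSpace ℝ (Fin n) ≃ₗᵢ[ℝ] EuclideanSpace ℝ (Fin n) :=
  { LinearEquiv.ofInvolutive (reflL e) (reflL_invol he) with
    norm_map' := norm_reflv he }

lemma reflH_measurePreserving (he : ‖e‖ = 1) :
    MeasurePreserving (reflH lam e) volume volume := by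
  have h1 := (reflLI he).measurePreserving
  have h2 := measurePreserving_add_right (volume : Measure (EuclideanSpace ℝ (Fin n)))
    ((2 * lam) • e)
  have h3 : reflH lam e = (fun y => y + (2 * lam) • e) ∘ (reflLI he) := by
    funext x
    simp only [Function.comp_apply, reflLI, reflL, LinearIsometryEquiv.coe_mk,
      LinearEquiv.coe_ofInvolutive, LinearMap.coe_mk, AddHom.coe_mk, reflH]
    module
  rw [h3]
  exact h2.comp h1

lemma reflH_continuous : Continuous (reflH lam e) := by
  apply continuous_id.sub
  exact ((continuous_const.mul ((continuous_id.inner (𝕜 := ℝ) continuous_const).sub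
    continuous_const))).smul continuous_const

/-- The reflection as a homeomorphism. -/
noncomputable def reflHomeo (he : ‖e‖ = 1) (lam : ℝ) :
    EuclideanSpace ℝ (Fin n) ≃ₜ EuclideanSpace ℝ (Fin n) where
  toFun := reflH lam e
  invFun := reflH lam e
  left_inv := reflH_invol he
  right_inv := reflH_invol he
  continuous_toFun := reflH_continuous
  continuous_invFun := reflH_continuous

lemma reflH_measurableEmbedding (he : ‖e‖ = 1) :
    MeasurableEmbedding (reflH lam e) :=
  (reflHomeo he lam).measurableEmbedding

/-- Local integrability of the Riesz kernel. -/
lemma integrableOn_riesz (hα₀ : 0 < α) (hα₁ : α < n) (z : EuclideanSpace ℝ (Fin n))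
    {s : Set (EuclideanSpace ℝ (Fin n))} (hs : IsBounded s) :
    IntegrableOn (fun y => ‖z - y‖ ^ (-α)) s volume := by
  obtain ⟨M, hM⟩ := hs.subset_closedBall z
  refine IntegrableOn.mono_set ?_ hM
  have hmeas : Measurable fun y : EuclideanSpace ℝ (Fin n) => ‖z - y‖ ^ (-α) := by fun_prop
  refine ⟨hmeas.aestronglyMeasurable, ?_⟩
  rw [hasFiniteIntegral_iff_ofReal (ae_of_all _ fun y => Real.rpow_nonneg (norm_nonneg _) _)]
  set μ := (volume : Measure (EuclideanSpace ℝ (Fin n))).restrict (closedBall z M)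
  rw [lintegral_eq_lintegral_meas_le μ
    (ae_of_all _ fun y => Real.rpow_nonneg (norm_nonneg _) _) hmeas.aemeasurable]
  have hsubset : ∀ t : ℝ, 0 < t →
      {a : EuclideanSpace ℝ (Fin n) | t ≤ ‖z - a‖ ^ (-α)} ⊆ closedBall z (t ^ (-α⁻¹)) := by
    intro t ht a ha
    simp only [mem_setOf_eq] at ha
    rcases eq_or_ne ‖z - a‖ 0 with h0 | h0
    · rw [h0, Real.zero_rpow (neg_ne_zero.mpr hα₀.ne')] at ha; linarith
    · have hr : 0 < ‖z - a‖ := lt_of_le_of_ne (norm_nonneg _) (Ne.symm h0)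
      have := Real.rpow_le_rpow_of_nonpos ht ha (neg_nonpos.mpr (inv_nonneg.mpr hα₀.le))
      rw [← Real.rpow_mul (norm_nonneg _), show (-α) * (-α⁻¹) = 1 by field_simp,
        Real.rpow_one] at this
      rw [mem_closedBall, dist_comm, dist_eq_norm]
      exact this
  have hn1 : -(α⁻¹ * (n : ℝ)) < -1 := by
    rw [neg_lt_neg_iff]
    rw [lt_inv_mul_iff₀ hα₀]
    simpa using hα₁
  calc ∫⁻ t in Ioi (0:ℝ), μ {a | t ≤ ‖z - a‖ ^ (-α)}
      ≤ ∫⁻ t in Ioc (0:ℝ) 1 ∪ Ioi 1, μ {a | t ≤ ‖z - a‖ ^ (-α)} :=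
        lintegral_mono_set Ioi_subset_Ioc_union_Ioi
    _ ≤ (∫⁻ t in Ioc (0:ℝ) 1, μ {a | t ≤ ‖z - a‖ ^ (-α)}) +
        ∫⁻ t in Ioi (1:ℝ), μ {a | t ≤ ‖z - a‖ ^ (-α)} := lintegral_union_le _ _ _
    _ < ⊤ := by
        refine ENNReal.add_lt_top.2 ⟨?_, ?_⟩
        · calc (∫⁻ t in Ioc (0:ℝ) 1, μ {a | t ≤ ‖z - a‖ ^ (-α)})
              ≤ ∫⁻ _ in Ioc (0:ℝ) 1, volume (closedBall z M) := by
                refine lintegral_mono fun t => ?_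
                exact le_trans (measure_mono (subset_univ _))
                  (by rw [Measure.restrict_apply_univ])
            _ = volume (closedBall z M) * volume (Ioc (0:ℝ) 1) := by
                rw [setLIntegral_const]
            _ < ⊤ := by
                refine ENNReal.mul_lt_top measure_closedBall_lt_top ?_
                simp [Real.volume_Ioc]
        · have hbound : ∀ t ∈ Ioi (1:ℝ), μ {a | t ≤ ‖z - a‖ ^ (-α)} ≤
              ENNReal.ofReal (t ^ (-(α⁻¹ * (n:ℝ)))) *
                volume (ball (0 : EuclideanSpace ℝ (Fin n)) 1) := by
            intro t ht
            have ht0 : (0:ℝ) < t := lt_trans one_pos ht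
            have h1 : μ {a | t ≤ ‖z - a‖ ^ (-α)} ≤ volume (closedBall z (t ^ (-α⁻¹))) :=
              le_trans (Measure.restrict_le_self _) (measure_mono (hsubset t ht0))
            rw [Measure.addHaar_closedBall _ z (Real.rpow_nonneg ht0.le _)] at h1
            refine le_trans h1 (le_of_eq ?_)
            congr 1
            rw [finrank_euclideanSpace_fin, ← Real.rpow_natCast (t ^ (-α⁻¹)) n,
              ← Real.rpow_mul ht0.le]
            ring_nf
          calc ∫⁻ t in Ioi (1:ℝ), μ {a | t ≤ ‖z - a‖ ^ (-α)}
              ≤ ∫⁻ t in Ioi (1:ℝ), ENNReal.ofReal (t ^ (-(α⁻¹ * (n:ℝ)))) *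
                  volume (ball (0 : EuclideanSpace ℝ (Fin n)) 1) :=
                setLIntegral_mono' measurableSet_Ioi hbound
            _ = (∫⁻ t in Ioi (1:ℝ), ENNReal.ofReal (t ^ (-(α⁻¹ * (n:ℝ))))) *
                  volume (ball (0 : EuclideanSpace ℝ (Fin n)) 1) :=
                lintegral_mul_const' _ _ measure_ball_lt_top.ne
            _ < ⊤ := ENNReal.mul_lt_top
                ((integrableOn_Ioi_rpow_of_lt hn1 one_pos).setLIntegral_lt_top)
                measure_ball_lt_top

end Helpers

/-- Strict reflection inequality for the Riesz potential: if `E ⊆ ℝⁿ` is bounded measurable,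
`R` is reflection across the hyperplane `{x·e₁ = λ}`, `Σ = E ∩ {x·e₁ < λ}`, `R(Σ) ⊆ E` up to a
null set, and `G = (E ∩ {x·e₁ > λ}) \ R(Σ)` has positive measure, then `v_E(R x) > v_E(x)` for
every `x` with `x·e₁ < λ`. -/
theorem rieszPotential_reflection_strict_inequality
    (n : ℕ) (hn : 2 ≤ n) (α : ℝ) (hα₀ : 0 < α) (hα₁ : α < n) (lam : ℝ)
    (E : Set (EuclideanSpace ℝ (Fin n))) (hE : MeasurableSet E) (hbd : IsBounded E) :
    let e₁ : EuclideanSpace ℝ (Fin n) := EuclideanSpace.single ⟨0, by omega⟩ 1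
    let R : EuclideanSpace ℝ (Fin n) → EuclideanSpace ℝ (Fin n) :=
      fun x => x - (2 * ((inner ℝ x e₁ : ℝ) - lam)) • e₁
    let Sig : Set (EuclideanSpace ℝ (Fin n)) :=
      E ∩ {x : EuclideanSpace ℝ (Fin n) | (inner ℝ x e₁ : ℝ) < lam}
    volume (R '' Sig \ E) = 0 →
    let G : Set (EuclideanSpace ℝ (Fin n)) :=
      (E ∩ {x : EuclideanSpace ℝ (Fin n) | lam < (inner ℝ x e₁ : ℝ)}) \ (R '' Sig)
    0 < volume G →
    ∀ x : EuclideanSpace ℝ (Fin n), (inner ℝ x e₁ : ℝ) < lam →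
      rieszPotential α E x < rieszPotential α E (R x) := by
  intro e₁ R Sig hnull G hG x hx
  have he : ‖e₁‖ = 1 := by
    show ‖EuclideanSpace.single _ (1:ℝ)‖ = 1
    simp [EuclideanSpace.norm_single]
  haveI : Nontrivial (EuclideanSpace ℝ (Fin n)) :=
    nontrivial_of_ne e₁ 0 fun h => by rw [h, norm_zero] at he; exact one_ne_zero he.symm
  have hR : R = reflH lam e₁ := rfl
  have hemb : MeasurableEmbedding (reflH lam e₁) := reflH_measurableEmbedding he
  have hmp : MeasurePreserving (reflH lam e₁) volume volume := reflH_measurePreserving he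
  have hinner : Measurable fun y : EuclideanSpace ℝ (Fin n) => (inner ℝ y e₁ : ℝ) :=
    (continuous_id.inner continuous_const).measurable
  have hSig : MeasurableSet Sig := hE.inter (measurableSet_lt hinner measurable_const)
  have hRSig : MeasurableSet (R '' Sig) := by
    rw [hR]; exact hemb.measurableSet_image.mpr hSig
  set S2 : Set (EuclideanSpace ℝ (Fin n)) :=
    E ∩ {y : EuclideanSpace ℝ (Fin n) | (inner ℝ y e₁ : ℝ) = lam} with hS2def
  set S3 : Set (EuclideanSpace ℝ (Fin n)) := R '' Sig ∩ E with hS3def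
  have hS2 : MeasurableSet S2 := hE.inter (measurableSet_eq_fun hinner measurable_const)
  have hS3 : MeasurableSet S3 := hRSig.inter hE
  have hGmeas : MeasurableSet G :=
    (hE.inter (measurableSet_lt measurable_const hinner)).diff hRSig
  -- subsets of E
  have hSigE : Sig ⊆ E := inter_subset_left
  have hS2E : S2 ⊆ E := inter_subset_left
  have hS3E : S3 ⊆ E := inter_subset_right
  have hGE : G ⊆ E := fun y hy => hy.1.1
  have hIntSub : ∀ (z : EuclideanSpace ℝ (Fin n)) (s : Set (EuclideanSpace ℝ (Fin n))),
      s ⊆ E → IntegrableOn (fun y => ‖z - y‖ ^ (-α)) s volume := fun z s hs =>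
    (integrableOn_riesz hα₀ hα₁ z hbd).mono_set hs
  -- decomposition of E
  have hEdecomp : E = (Sig ∪ S2) ∪ (S3 ∪ G) := by
    ext y
    constructor
    · intro hy
      rcases lt_trichotomy ((inner ℝ y e₁ : ℝ)) lam with h | h | h
      · exact Or.inl (Or.inl ⟨hy, h⟩)
      · exact Or.inl (Or.inr ⟨hy, h⟩)
      · by_cases hmem : y ∈ R '' Sig
        · exact Or.inr (Or.inl ⟨hmem, hy⟩)
        · exact Or.inr (Or.inr ⟨⟨hy, h⟩, hmem⟩)
    · rintro ((⟨h, -⟩ | ⟨h, -⟩) | (⟨-, h⟩ | ⟨⟨h, -⟩, -⟩)) <;> exact h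
  have hRSig_gt : R '' Sig ⊆ {y : EuclideanSpace ℝ (Fin n) | lam < (inner ℝ y e₁ : ℝ)} := by
    rintro - ⟨w, ⟨-, hw⟩, rfl⟩
    have : (inner ℝ (reflH lam e₁ w) e₁ : ℝ) = 2 * lam - (inner ℝ w e₁ : ℝ) := reflH_inner he w
    show lam < (inner ℝ (R w) e₁ : ℝ)
    rw [hR, this]
    have hw' : (inner ℝ w e₁ : ℝ) < lam := hw
    linarith
  have disj1 : Disjoint Sig S2 := by
    rw [disjoint_left]
    rintro a ⟨-, ha⟩ ⟨-, hb⟩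
    exact absurd hb (ne_of_lt ha)
  have disj2 : Disjoint (Sig ∪ S2) (S3 ∪ G) := by
    rw [disjoint_left]
    rintro a ha hb
    have h1 : (inner ℝ a e₁ : ℝ) ≤ lam := by
      rcases ha with ⟨-, h⟩ | ⟨-, h⟩
      · exact le_of_lt h
      · exact le_of_eq h
    have h2 : lam < (inner ℝ a e₁ : ℝ) := by
      rcases hb with ⟨h, -⟩ | ⟨⟨-, h⟩, -⟩
      · exact hRSig_gt h
      · exact h
    linarith
  have disj3 : Disjoint S3 G := by
    rw [disjoint_left]
    rintro a ⟨ha, -⟩ ⟨-, hb⟩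
    exact hb ha
  -- splitting of the integral
  have hsplit : ∀ z : EuclideanSpace ℝ (Fin n),
      (∫ y in E, ‖z - y‖ ^ (-α)) = ((∫ y in Sig, ‖z - y‖ ^ (-α)) + ∫ y in S2, ‖z - y‖ ^ (-α))
        + ((∫ y in S3, ‖z - y‖ ^ (-α)) + ∫ y in G, ‖z - y‖ ^ (-α)) := by
    intro z
    rw [hEdecomp,
      setIntegral_union disj2 (hS3.union hGmeas)
        ((hIntSub z _ (union_subset hSigE hS2E)))
        ((hIntSub z _ (union_subset hS3E hGE))),
      setIntegral_union disj1 hS2 (hIntSub z _ hSigE) (hIntSub z _ hS2E),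
      setIntegral_union disj3 hGmeas (hIntSub z _ hS3E) (hIntSub z _ hGE)]
  -- the hyperplane part
  have h2 : (∫ y in S2, ‖R x - y‖ ^ (-α)) = ∫ y in S2, ‖x - y‖ ^ (-α) := by
    refine setIntegral_congr_fun hS2 fun y hy => ?_
    have hfix : reflH lam e₁ y = y := reflH_fixed hy.2
    have : ‖R x - y‖ = ‖x - y‖ := by
      conv_lhs => rw [hR, show y = reflH lam e₁ y from hfix.symm]
      exact reflH_isometry he x y
    rw [this]
  -- change of variables on the reflected part
  have hae : S3 =ᵐ[volume] R '' Sig := by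
    rw [ae_eq_set]
    constructor
    · rw [show S3 \ (R '' Sig) = ∅ from diff_eq_empty.mpr inter_subset_left]
      simp
    · rw [show (R '' Sig) \ S3 = (R '' Sig) \ E by
        ext y; simp only [hS3def, mem_diff, mem_inter_iff]; tauto]
      exact hnull
  have himg : ∀ z : EuclideanSpace ℝ (Fin n),
      (∫ y in R '' Sig, ‖z - y‖ ^ (-α)) = ∫ y in Sig, ‖z - reflH lam e₁ y‖ ^ (-α) := by
    intro z
    rw [hR]
    exact hmp.setIntegral_image_emb hemb _ _
  have h3 : (∫ y in S3, ‖x - y‖ ^ (-α)) = ∫ y in Sig, ‖R x - y‖ ^ (-α) := by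
    rw [setIntegral_congr_set hae, himg x]
    refine setIntegral_congr_fun hSig fun y hy => ?_
    rw [hR, ← reflH_norm_comm he]
  have h3' : (∫ y in S3, ‖R x - y‖ ^ (-α)) = ∫ y in Sig, ‖x - y‖ ^ (-α) := by
    rw [setIntegral_congr_set hae, himg (R x), hR]
    refine setIntegral_congr_fun hSig fun y hy => ?_
    rw [reflH_isometry he]
  -- strict inequality on G
  have h4 : (∫ y in G, ‖x - y‖ ^ (-α)) < ∫ y in G, ‖R x - y‖ ^ (-α) := by
    set f : EuclideanSpace ℝ (Fin n) → ℝ :=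
      fun y => ‖R x - y‖ ^ (-α) - ‖x - y‖ ^ (-α) with hfdef
    have hfint : IntegrableOn f G volume := (hIntSub (R x) G hGE).sub (hIntSub x G hGE)
    have hne : ∀ᵐ y : EuclideanSpace ℝ (Fin n) ∂volume, y ≠ R x := by
      rw [ae_iff]
      have : {y : EuclideanSpace ℝ (Fin n) | ¬y ≠ R x} = {R x} := by ext y; simp
      rw [this]
      exact measure_singleton _
    have hptwise : ∀ y ∈ G, y ≠ R x → 0 < f y := by
      intro y hy hyne
      have hy2 : lam < (inner ℝ y e₁ : ℝ) := hy.1.2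
      have hlt : ‖R x - y‖ < ‖x - y‖ := by rw [hR]; exact reflH_strict he hx hy2
      have hRxy : (0:ℝ) < ‖R x - y‖ := by
        rw [norm_sub_pos_iff]
        exact Ne.symm hyne
      have := Real.rpow_lt_rpow_of_neg hRxy hlt (neg_neg_iff_pos.mpr hα₀)
      simpa [hfdef] using sub_pos.mpr this
    have hnonneg : 0 ≤ᵐ[volume.restrict G] f := by
      filter_upwards [ae_restrict_mem hGmeas, ae_restrict_of_ae hne] with y hy hyne
      exact (hptwise y hy hyne).le
    have hpos : 0 < ∫ y in G, f y := by
      rw [setIntegral_pos_iff_support_of_nonneg_ae hnonneg hfint]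
      have hsup : G \ {R x} ⊆ Function.support f ∩ G := by
        intro y hy
        exact ⟨(hptwise y hy.1 (by simpa using hy.2)).ne', hy.1⟩
      refine lt_of_lt_of_le ?_ (measure_mono hsup)
      rwa [measure_diff_null (measure_singleton _)]
    rw [hfdef] at hpos
    rw [integral_sub (hIntSub (R x) G hGE) (hIntSub x G hGE)] at hpos
    linarith
  show (∫ y in E, ‖x - y‖ ^ (-α)) < ∫ y in E, ‖R x - y‖ ^ (-α)
  rw [hsplit x, hsplit (R x), h2, h3, h3']
  linarith
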